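/- Any impossibility among the axioms {upper invariance, lower invariance, ordinal efficiency, symmetry} for 4 agents and 4 objects extends to any n > 4: if such a mechanism existed for n agents and n objects, then restricting attention to profiles where agents 5,…,n each uniquely top-rank their own distinct objects e_5,…,e_n (appended below the original four objects in the first four agents' orders) yields a mechanism on 4 agents and 4 objects with the same four properties. -/

import Mathlib

open Finset

/-- A strict preference order over `n` objects, encoded as a rank function:
`P j < P j'` means object `j` is strictly preferred to object `j'`. -/
abbrev Pref (n : ℕ) := Fin n ≃ Fin n

/-- A (random) assignment: rows are agents, columns are objects. -/
abbrev Assignment (n : ℕ) := Fin n → Fin n → ℝ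

/-- Bi-stochastic matrix: nonnegative entries, all rows and columns sum to 1. -/
def BiStochastic {n : ℕ} (x : Assignment n) : Prop :=
  (∀ i j, 0 ≤ x i j) ∧ (∀ i, ∑ j, x i j = 1) ∧ (∀ j, ∑ i, x i j = 1)

/-- A mechanism maps preference profiles to assignments. -/
abbrev Mechanism (n : ℕ) := (Fin n → Pref n) → Assignment n

/-- A mechanism always outputs bi-stochastic matrices. -/
def ValidMech {n : ℕ} (φ : Mechanism n) : Prop := ∀ P, BiStochastic (φ P)

/-- `P'` arises from `P` by swapping the consecutively ranked objects `j ≻ j'`. -/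
def AdjSwap {n : ℕ} (P P' : Pref n) (j j' : Fin n) : Prop :=
  (P j' : ℕ) = (P j : ℕ) + 1 ∧ P' = (Equiv.swap j j').trans P

/-- Upper invariance: a swap of consecutive `j ≻ j'` leaves the swapping agent's
probabilities for objects strictly preferred to `j` unchanged. -/
def UpperInvariant {n : ℕ} (φ : Mechanism n) : Prop :=
  ∀ (P : Fin n → Pref n) (i j j' : Fin n) (P' : Pref n),
    AdjSwap (P i) P' j j' →
    ∀ k, P i k < P i j → φ (Function.update P i P') i k = φ P i k

/-- Lower invariance: a swap of consecutive `j ≻ j'` leaves the swapping agent's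
probabilities for objects ranked strictly below `j'` unchanged. -/
def LowerInvariant {n : ℕ} (φ : Mechanism n) : Prop :=
  ∀ (P : Fin n → Pref n) (i j j' : Fin n) (P' : Pref n),
    AdjSwap (P i) P' j j' →
    ∀ k, P i j' < P i k → φ (Function.update P i P') i k = φ P i k

/-- Swap monotonicity: after a swap of consecutive `j ≻ j'`, either the agent's
assignment vector is unchanged, or her probability for `j` strictly decreases and
her probability for `j'` strictly increases. -/
def SwapMonotonic {n : ℕ} (φ : Mechanism n) : Prop :=
  ∀ (P : Fin n → Pref n) (i j j' : Fin n) (P' : Pref n),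
    AdjSwap (P i) P' j j' →
    φ (Function.update P i P') i = φ P i ∨
      (φ (Function.update P i P') i j < φ P i j ∧
       φ P i j' < φ (Function.update P i P') i j')

/-- `y` first order-stochastically dominates `x` at preference order `P`. -/
def FOSD {n : ℕ} (P : Pref n) (y x : Fin n → ℝ) : Prop :=
  ∀ j, ∑ k ∈ univ.filter (fun k => P k ≤ P j), x k ≤
       ∑ k ∈ univ.filter (fun k => P k ≤ P j), y k

/-- `y` strictly ordinally dominates `x` at profile `P`. -/
def StrictDom {n : ℕ} (P : Fin n → Pref n) (y x : Assignment n) : Prop :=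
  (∀ i, FOSD (P i) (y i) (x i)) ∧
  ∃ i j, ∑ k ∈ univ.filter (fun k => P i k ≤ P i j), x i k <
         ∑ k ∈ univ.filter (fun k => P i k ≤ P i j), y i k

/-- `x` is ordinally efficient at profile `P`. -/
def OrdEffAt {n : ℕ} (P : Fin n → Pref n) (x : Assignment n) : Prop :=
  ¬ ∃ y, BiStochastic y ∧ StrictDom P y x

/-- An ordinally efficient mechanism. -/
def OrdEff {n : ℕ} (φ : Mechanism n) : Prop := ∀ P, OrdEffAt P (φ P)

/-- Symmetry (equal treatment of equals). -/
def SymmetricMech {n : ℕ} (φ : Mechanism n) : Prop :=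
  ∀ P (i i' : Fin n), P i = P i' → φ P i = φ P i'

/-- Anonymity: exchanging two agents' reports exchanges their assignment vectors. -/
def Anonymous {n : ℕ} (φ : Mechanism n) : Prop :=
  ∀ P (i i' : Fin n), φ P i = φ (fun k => P (Equiv.swap i i' k)) i'

/-- Neutrality: relabeling objects via `π` relabels the assignment columns. -/
def Neutral {n : ℕ} (φ : Mechanism n) : Prop :=
  ∀ P (π : Equiv.Perm (Fin n)) (i j : Fin n),
    φ (fun k => π.symm.trans (P k)) i (π j) = φ P i j

/-- Non-bossiness. -/
def NonBossy {n : ℕ} (φ : Mechanism n) : Prop :=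
  ∀ (P : Fin n → Pref n) (i : Fin n) (P' : Pref n),
    φ (Function.update P i P') i = φ P i →
    φ (Function.update P i P') = φ P

namespace Ext
variable {n : ℕ}

def embO (h : 4 ≤ n) : Fin 4 → Fin n := Fin.castLE h

lemma embO_val (h : 4 ≤ n) (j : Fin 4) : ((embO h j : Fin n) : ℕ) = (j : ℕ) := rfl

lemma embO_inj (h : 4 ≤ n) : Function.Injective (embO h) := Fin.castLE_injective h

def extPref (h : 4 ≤ n) (Q : Pref 4) : Pref n where
  toFun j := if hj : (j : ℕ) < 4 then embO h (Q ⟨j, hj⟩) else j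
  invFun j := if hj : (j : ℕ) < 4 then embO h (Q.symm ⟨j, hj⟩) else j
  left_inv j := by
    by_cases hj : (j : ℕ) < 4
    · simp only [dif_pos hj]
      have h2 : ((embO h (Q ⟨j, hj⟩) : Fin n) : ℕ) < 4 := (Q ⟨j, hj⟩).2
      simp only [dif_pos h2]
      have : (⟨((embO h (Q ⟨j, hj⟩) : Fin n) : ℕ), h2⟩ : Fin 4) = Q ⟨j, hj⟩ := rfl
      rw [this, Equiv.symm_apply_apply]
      exact Fin.ext rfl
    · simp only [dif_neg hj]
  right_inv j := by
    by_cases hj : (j : ℕ) < 4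
    · simp only [dif_pos hj]
      have h2 : ((embO h (Q.symm ⟨j, hj⟩) : Fin n) : ℕ) < 4 := (Q.symm ⟨j, hj⟩).2
      simp only [dif_pos h2]
      have : (⟨((embO h (Q.symm ⟨j, hj⟩) : Fin n) : ℕ), h2⟩ : Fin 4) = Q.symm ⟨j, hj⟩ := rfl
      rw [this, Equiv.apply_symm_apply]
      exact Fin.ext rfl
    · simp only [dif_neg hj]

lemma extPref_emb (h : 4 ≤ n) (Q : Pref 4) (j : Fin 4) :
    extPref h Q (embO h j) = embO h (Q j) := by
  show (if hj : ((embO h j : Fin n) : ℕ) < 4 then embO h (Q ⟨_, hj⟩) else _) = _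
  rw [dif_pos (show ((embO h j : Fin n) : ℕ) < 4 from j.2)]
  congr 1

lemma extPref_high (h : 4 ≤ n) (Q : Pref 4) (j : Fin n) (hj : ¬ (j : ℕ) < 4) :
    extPref h Q j = j := by
  show (if hj : (j : ℕ) < 4 then _ else j) = j
  rw [dif_neg hj]

def topPref (hn : 0 < n) (k : Fin n) : Pref n := Equiv.swap k ⟨0, hn⟩

lemma topPref_self (hn : 0 < n) (k : Fin n) : topPref hn k k = ⟨0, hn⟩ :=
  Equiv.swap_apply_left k _

def extProfile (h : 4 ≤ n) (Q : Fin 4 → Pref 4) : Fin n → Pref n :=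
  fun k => if hk : (k : ℕ) < 4 then extPref h (Q ⟨k, hk⟩) else topPref (by omega) k

lemma extProfile_emb (h : 4 ≤ n) (Q : Fin 4 → Pref 4) (i : Fin 4) :
    extProfile h Q (embO h i) = extPref h (Q i) := by
  show (if hk : ((embO h i : Fin n) : ℕ) < 4 then extPref h (Q ⟨_, hk⟩) else _) = _
  rw [dif_pos (show ((embO h i : Fin n) : ℕ) < 4 from i.2)]
  congr 1

lemma extProfile_high (h : 4 ≤ n) (Q : Fin 4 → Pref 4) (k : Fin n) (hk : ¬ (k : ℕ) < 4) :
    extProfile h Q k = topPref (by omega) k := by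
  show (if hk : (k : ℕ) < 4 then _ else _) = _
  rw [dif_neg hk]


/-- Sum over a filter contained in the low block equals sum over `Fin 4`. -/
lemma sum_filter_emb (h : 4 ≤ n) (p : Fin n → Prop) [DecidablePred p]
    (hp : ∀ j, p j → (j : ℕ) < 4) (f : Fin n → ℝ) :
    ∑ j ∈ univ.filter p, f j
      = ∑ j ∈ univ.filter (fun j : Fin 4 => p (embO h j)), f (embO h j) := by
  refine Finset.sum_bij' (fun m hm => (⟨(m : ℕ), hp m (mem_filter.mp hm).2⟩ : Fin 4))
    (fun j _ => embO h j) ?_ ?_ ?_ ?_ ?_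
  · intro a ha
    simp only [mem_filter, mem_univ, true_and] at ha ⊢
    convert ha using 2
    exact Fin.ext rfl
  · intro a ha
    simp only [mem_filter, mem_univ, true_and] at ha ⊢
    exact ha
  · intro a ha
    exact Fin.ext rfl
  · intro a ha
    exact Fin.ext rfl
  · intro a ha
    congr 1

lemma sum_emb (h : 4 ≤ n) (f : Fin n → ℝ) :
    ∑ j ∈ univ.filter (fun j : Fin n => (j : ℕ) < 4), f j = ∑ j : Fin 4, f (embO h j) := by
  rw [sum_filter_emb h _ (fun j hj => hj) f,
    Finset.filter_true_of_mem (fun (j : Fin 4) _ => (show ((embO h j : Fin n) : ℕ) < 4 from j.2))]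

/-- objects `< 4` are ranked above objects `≥ 4` by extended prefs of low agents -/
lemma ext_rank_low_lt (h : 4 ≤ n) (Q : Pref 4) (a b : Fin n)
    (ha : (a : ℕ) < 4) (hb : ¬ (b : ℕ) < 4) : extPref h Q a < extPref h Q b := by
  have h1 : extPref h Q a = embO h (Q ⟨a, ha⟩) := extPref_emb h Q ⟨a, ha⟩
  rw [Fin.lt_def, h1, extPref_high h Q b hb, embO_val]
  exact lt_of_lt_of_le (Q ⟨a, ha⟩).2 (le_of_not_gt hb)

end Ext


namespace Ext
variable {n : ℕ}

lemma one_of_ne_zero (f : Fin n → ℝ) (h0 : ∀ j, 0 ≤ f j) (h1 : ∑ j, f j = 1)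
    (k : Fin n) (hk : f k = 1) {j : Fin n} (hj : j ≠ k) : f j = 0 := by
  have he : ∑ m ∈ univ.erase k, f m = 0 := by
    have := Finset.add_sum_erase univ f (mem_univ k)
    rw [h1, hk] at this
    linarith
  exact (Finset.sum_eq_zero_iff_of_nonneg (fun m _ => h0 m)).mp he j
    (Finset.mem_erase.mpr ⟨hj, mem_univ j⟩)

lemma entry_le_one (f : Fin n → ℝ) (h0 : ∀ j, 0 ≤ f j) (h1 : ∑ j, f j = 1)
    (k : Fin n) : f k ≤ 1 := by
  rw [← h1]
  exact Finset.single_le_sum (fun m _ => h0 m) (mem_univ k)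

/-- Key step: ordinal efficiency forces each high agent to receive her top object. -/
lemma key (h4 : 4 ≤ n) (P : Fin n → Pref n) (x : Assignment n)
    (hx : BiStochastic x) (heff : OrdEffAt P x)
    (htop : ∀ k : Fin n, ¬(k : ℕ) < 4 → ((P k k : Fin n) : ℕ) = 0)
    (hrank : ∀ i a b : Fin n, (i : ℕ) < 4 → (a : ℕ) < 4 → ¬(b : ℕ) < 4 → P i a < P i b) :
    ∀ k : Fin n, ¬(k : ℕ) < 4 → x k k = 1 := by
  obtain ⟨hx0, hxr, hxc⟩ := hx
  by_contra hcon
  push_neg at hcon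
  obtain ⟨k₀, hk₀', hk₀ne⟩ := hcon
  have hk₀ : ¬ (k₀ : ℕ) < 4 := not_lt.mpr hk₀'
  set F : Finset (Fin n) := univ.filter (fun k : Fin n => (k : ℕ) < 4) with hF
  set S : Finset (Fin n) := univ.filter (fun k : Fin n => ¬ (k : ℕ) < 4) with hS
  set s : Fin n → ℝ := fun i => ∑ j ∈ S, x i j with hsdef
  set d : Fin n → ℝ := fun j => ∑ k ∈ S, x k j with hddef
  set T : ℝ := ∑ i ∈ F, s i with hTdef
  have hs0 : ∀ i, 0 ≤ s i := fun i => Finset.sum_nonneg (fun j _ => hx0 i j)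
  have hd0 : ∀ j, 0 ≤ d j := fun j => Finset.sum_nonneg (fun k _ => hx0 k j)
  have hT0 : 0 ≤ T := Finset.sum_nonneg (fun i _ => hs0 i)
  have hrowF : ∀ i, ∑ j ∈ F, x i j = 1 - s i := by
    intro i
    have := Finset.sum_filter_add_sum_filter_not univ (fun k : Fin n => (k : ℕ) < 4) (x i)
    rw [hxr i] at this
    linarith [this]
  have hcolF : ∀ j, ∑ i ∈ F, x i j = 1 - d j := by
    intro j
    have := Finset.sum_filter_add_sum_filter_not univ (fun k : Fin n => (k : ℕ) < 4) (fun i => x i j)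
    rw [hxc j] at this
    linarith [this]
  have hcard : ∑ _j ∈ F, (1 : ℝ) = 4 := by
    rw [hF, sum_emb h4 (fun _ => (1 : ℝ))]
    norm_num
  have hTd : ∑ j ∈ F, d j = T := by
    have h1 : ∑ i ∈ F, (1 - s i) = ∑ i ∈ F, ∑ j ∈ F, x i j := by
      exact Finset.sum_congr rfl (fun i _ => (hrowF i).symm)
    have h2 : ∑ j ∈ F, (1 - d j) = ∑ j ∈ F, ∑ i ∈ F, x i j := by
      exact Finset.sum_congr rfl (fun j _ => (hcolF j).symm)
    rw [Finset.sum_comm] at h2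
    rw [Finset.sum_sub_distrib] at h1 h2
    rw [hcard] at h1 h2
    rw [← hTdef] at h1
    linarith [h1, h2]
  have hTzero_s : T = 0 → ∀ i ∈ F, s i = 0 := by
    intro hT i hi
    exact (Finset.sum_eq_zero_iff_of_nonneg (fun i _ => hs0 i)).mp hT i hi
  -- the dominating assignment
  set y : Assignment n := fun i j =>
    if (i : ℕ) < 4 then (if (j : ℕ) < 4 then x i j + s i * d j / T else 0)
    else (if j = i then 1 else 0) with hydef
  have hy0 : ∀ i j, 0 ≤ y i j := by
    intro i j
    rw [hydef]
    dsimp only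
    split_ifs with h1 h2 h3
    · exact add_nonneg (hx0 i j) (div_nonneg (mul_nonneg (hs0 i) (hd0 j)) hT0)
    · exact le_refl 0
    · norm_num
    · exact le_refl 0
  -- row sums of y
  have hyrow : ∀ i, ∑ j, y i j = 1 := by
    intro i
    by_cases hi : (i : ℕ) < 4
    · have e1 : ∀ j : Fin n, y i j = if (j : ℕ) < 4 then x i j + s i * d j / T else 0 := by
        intro j; rw [hydef]; dsimp only; rw [if_pos hi]
      calc ∑ j, y i j = ∑ j ∈ F, (x i j + s i * d j / T) := by
            rw [hF, Finset.sum_filter]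
            exact Finset.sum_congr rfl (fun j _ => e1 j)
        _ = (1 - s i) + (s i / T) * T := by
            rw [Finset.sum_add_distrib, hrowF i]
            congr 1
            have e0 : ∑ j ∈ F, s i * d j / T = s i / T * ∑ j ∈ F, d j := by
              rw [Finset.mul_sum]
              exact Finset.sum_congr rfl (fun j _ => by ring)
            rw [e0, hTd]
        _ = 1 := by
            by_cases hT : T = 0
            · have : s i = 0 := hTzero_s hT i (by
                rw [hF]; simp only [mem_filter, mem_univ, true_and]; exact hi)
              rw [this, hT]; ring
            · rw [div_mul_cancel₀ _ hT]; ring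
    · have e1 : ∀ j : Fin n, y i j = if j = i then 1 else 0 := by
        intro j; rw [hydef]; dsimp only; rw [if_neg hi]
      calc ∑ j, y i j = ∑ j, if j = i then (1:ℝ) else 0 :=
            Finset.sum_congr rfl (fun j _ => e1 j)
        _ = 1 := by simp
  -- column sums of y
  have hycol : ∀ j, ∑ i, y i j = 1 := by
    intro j
    have hsplit := Finset.sum_filter_add_sum_filter_not univ
      (fun k : Fin n => (k : ℕ) < 4) (fun i => y i j)
    rw [← hF, ← hS] at hsplit
    by_cases hj : (j : ℕ) < 4
    · have e1 : ∑ i ∈ F, y i j = (1 - d j) + (d j / T) * T := by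
        have : ∀ i ∈ F, y i j = x i j + s i * d j / T := by
          intro i hi
          rw [hF] at hi
          simp only [mem_filter, mem_univ, true_and] at hi
          rw [hydef]; dsimp only; rw [if_pos hi, if_pos hj]
        rw [Finset.sum_congr rfl this, Finset.sum_add_distrib, hcolF j]
        congr 1
        have e0 : ∑ i ∈ F, s i * d j / T = d j / T * ∑ i ∈ F, s i := by
          rw [Finset.mul_sum]
          exact Finset.sum_congr rfl (fun i _ => by ring)
        rw [e0, ← hTdef]
      have e2 : ∑ i ∈ S, y i j = 0 := by
        refine Finset.sum_eq_zero (fun i hi => ?_)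
        rw [hS] at hi
        simp only [mem_filter, mem_univ, true_and] at hi
        rw [hydef]; dsimp only; rw [if_neg hi, if_neg]
        intro hji; rw [hji] at hj; exact hi hj
      rw [← hsplit, e1, e2]
      by_cases hT : T = 0
      · have hdz : d j = 0 := by
          have : ∑ m ∈ F, d m = 0 := by rw [hTd, hT]
          refine (Finset.sum_eq_zero_iff_of_nonneg (fun m _ => hd0 m)).mp this j ?_
          rw [hF]; simp only [mem_filter, mem_univ, true_and]; exact hj
        rw [hdz, hT]; ring
      · rw [div_mul_cancel₀ _ hT]; ring
    · have e1 : ∑ i ∈ F, y i j = 0 := by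
        refine Finset.sum_eq_zero (fun i hi => ?_)
        rw [hF] at hi
        simp only [mem_filter, mem_univ, true_and] at hi
        rw [hydef]; dsimp only; rw [if_pos hi, if_neg hj]
      have e2 : ∑ i ∈ S, y i j = 1 := by
        have : ∀ i ∈ S, y i j = if j = i then (1:ℝ) else 0 := by
          intro i hi
          rw [hS] at hi
          simp only [mem_filter, mem_univ, true_and] at hi
          rw [hydef]; dsimp only; rw [if_neg hi]
        rw [Finset.sum_congr rfl this, Finset.sum_ite_eq]
        rw [if_pos]
        rw [hS]; simp only [mem_filter, mem_univ, true_and]; exact hj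
      rw [← hsplit, e1, e2]; ring
  -- FOSD
  have hfosd : ∀ i, FOSD (P i) (y i) (x i) := by
    intro i j
    set G : Finset (Fin n) := univ.filter (fun m => P i m ≤ P i j) with hG
    by_cases hi : (i : ℕ) < 4
    · by_cases hj : (j : ℕ) < 4
      · refine Finset.sum_le_sum (fun m hm => ?_)
        rw [hG] at hm
        simp only [mem_filter, mem_univ, true_and] at hm
        have hm4 : (m : ℕ) < 4 := by
          by_contra hm4
          exact absurd hm (not_le.mpr (hrank i j m hi hj hm4))
        rw [hydef]; dsimp only; rw [if_pos hi, if_pos hm4]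
        exact le_add_of_nonneg_right (div_nonneg (mul_nonneg (hs0 i) (hd0 m)) hT0)
      · have hle : ∑ m ∈ G, x i m ≤ 1 := by
          rw [← hxr i]
          exact Finset.sum_le_sum_of_subset_of_nonneg (Finset.subset_univ G)
            (fun m _ _ => hx0 i m)
        have heq : ∑ m ∈ G, y i m = 1 := by
          rw [← hyrow i]
          refine Finset.sum_subset (Finset.subset_univ G) (fun m _ hm => ?_)
          rw [hG] at hm
          simp only [mem_filter, mem_univ, true_and] at hm
          have hm4 : ¬ (m : ℕ) < 4 := by
            intro hm4
            exact hm (le_of_lt (hrank i m j hi hm4 hj))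
          rw [hydef]; dsimp only; rw [if_pos hi, if_neg hm4]
        rw [heq]; exact hle
    · have hle : ∑ m ∈ G, x i m ≤ 1 := by
        rw [← hxr i]
        exact Finset.sum_le_sum_of_subset_of_nonneg (Finset.subset_univ G)
          (fun m _ _ => hx0 i m)
      have heq : ∑ m ∈ G, y i m = 1 := by
        have e1 : ∀ m ∈ G, y i m = if m = i then (1:ℝ) else 0 := by
          intro m _
          rw [hydef]; dsimp only; rw [if_neg hi]
        rw [Finset.sum_congr rfl e1, Finset.sum_ite_eq']
        rw [if_pos]
        rw [hG]
        simp only [mem_filter, mem_univ, true_and]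
        rw [Fin.le_def, htop i hi]
        exact Nat.zero_le _
      rw [heq]; exact hle
  -- strictness at (k₀, k₀)
  have hGk : univ.filter (fun m => P k₀ m ≤ P k₀ k₀) = {k₀} := by
    ext m
    simp only [mem_filter, mem_univ, true_and, Finset.mem_singleton]
    constructor
    · intro hm
      rw [Fin.le_def, htop k₀ hk₀, Nat.le_zero] at hm
      have : P k₀ m = P k₀ k₀ := Fin.ext (by rw [hm, htop k₀ hk₀])
      exact (P k₀).injective this
    · intro hm; rw [hm]
  have hstrict : ∑ m ∈ univ.filter (fun m => P k₀ m ≤ P k₀ k₀), x k₀ m <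
      ∑ m ∈ univ.filter (fun m => P k₀ m ≤ P k₀ k₀), y k₀ m := by
    rw [hGk, Finset.sum_singleton, Finset.sum_singleton]
    have hyk : y k₀ k₀ = 1 := by
      rw [hydef]; dsimp only; rw [if_neg hk₀, if_pos rfl]
    rw [hyk]
    exact lt_of_le_of_ne (entry_le_one (x k₀) (hx0 k₀) (hxr k₀) k₀) hk₀ne
  exact heff ⟨y, ⟨hy0, hyrow, hycol⟩, hfosd, k₀, k₀, hstrict⟩

lemma extProfile_low (h : 4 ≤ n) (Q : Fin 4 → Pref 4) (i : Fin n) (hi : (i : ℕ) < 4) :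
    extProfile h Q i = extPref h (Q ⟨i, hi⟩) := extProfile_emb h Q ⟨i, hi⟩

lemma ext_htop (h : 4 ≤ n) (Q : Fin 4 → Pref 4) :
    ∀ k : Fin n, ¬(k : ℕ) < 4 → ((extProfile h Q k k : Fin n) : ℕ) = 0 := by
  intro k hk
  rw [extProfile_high h Q k hk, topPref_self]

lemma ext_hrank (h : 4 ≤ n) (Q : Fin 4 → Pref 4) :
    ∀ i a b : Fin n, (i : ℕ) < 4 → (a : ℕ) < 4 → ¬(b : ℕ) < 4 →
      extProfile h Q i a < extProfile h Q i b := by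
  intro i a b hi ha hb
  rw [extProfile_low h Q i hi]
  exact ext_rank_low_lt h _ a b ha hb

lemma emb_lt_iff (h : 4 ≤ n) (Qi : Pref 4) (k j : Fin 4) :
    extPref h Qi (embO h k) < extPref h Qi (embO h j) ↔ Qi k < Qi j := by
  rw [extPref_emb, extPref_emb, Fin.lt_def, Fin.lt_def, embO_val, embO_val]

lemma emb_le_iff (h : 4 ≤ n) (Qi : Pref 4) (k j : Fin 4) :
    extPref h Qi (embO h k) ≤ extPref h Qi (embO h j) ↔ Qi k ≤ Qi j := by
  rw [extPref_emb, extPref_emb, Fin.le_def, Fin.le_def, embO_val, embO_val]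

lemma fosd_sum (h : 4 ≤ n) (Qi : Pref 4) (j : Fin 4) (g : Fin n → ℝ) :
    ∑ m ∈ univ.filter (fun m => extPref h Qi m ≤ extPref h Qi (embO h j)), g m
      = ∑ m ∈ univ.filter (fun m : Fin 4 => Qi m ≤ Qi j), g (embO h m) := by
  have hp : ∀ m : Fin n, (extPref h Qi m ≤ extPref h Qi (embO h j)) → (m : ℕ) < 4 := by
    intro m hm
    by_contra hm4
    exact absurd hm (not_le.mpr (ext_rank_low_lt h Qi (embO h j) m j.2 hm4))
  rw [sum_filter_emb h _ hp g]
  refine Finset.sum_congr ?_ (fun _ _ => rfl)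
  refine Finset.filter_congr (fun m _ => ?_)
  simp only [emb_le_iff h Qi m j]

lemma extProfile_update (h : 4 ≤ n) (Q : Fin 4 → Pref 4) (i : Fin 4) (P' : Pref 4) :
    extProfile h (Function.update Q i P')
      = Function.update (extProfile h Q) (embO h i) (extPref h P') := by
  funext k
  by_cases hk : (k : ℕ) < 4
  · rw [extProfile_low h _ k hk]
    by_cases hki : k = embO h i
    · have h1 : (⟨(k : ℕ), hk⟩ : Fin 4) = i := by
        apply Fin.ext
        show (k : ℕ) = (i : ℕ)
        exact congrArg Fin.val hki
      rw [h1, Function.update_self, hki, Function.update_self]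
    · have h1 : (⟨(k : ℕ), hk⟩ : Fin 4) ≠ i := by
        intro h2
        apply hki
        apply Fin.ext
        have := congrArg Fin.val h2
        exact this
      rw [Function.update_of_ne h1, Function.update_of_ne hki, extProfile_low h Q k hk]
  · rw [extProfile_high h _ k hk, Function.update_of_ne, extProfile_high h Q k hk]
    intro h2
    apply hk
    rw [h2]
    exact i.2

lemma adjswap_lift (h : 4 ≤ n) (Qi P' : Pref 4) (j j' : Fin 4)
    (hs : AdjSwap Qi P' j j') :
    AdjSwap (extPref h Qi) (extPref h P') (embO h j) (embO h j') := by
  obtain ⟨hr, he⟩ := hs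
  constructor
  · rw [extPref_emb, extPref_emb, embO_val, embO_val]
    exact hr
  · rw [he]
    apply Equiv.ext
    intro m
    simp only [Equiv.trans_apply]
    by_cases hm : (m : ℕ) < 4
    · have hm' : m = embO h (⟨(m : ℕ), hm⟩ : Fin 4) := rfl
      rw [hm', (embO_inj h).swap_apply, extPref_emb, extPref_emb]
      rfl
    · have h1 : m ≠ embO h j := by
        intro h2; apply hm; rw [h2]; exact j.2
      have h2 : m ≠ embO h j' := by
        intro h2; apply hm; rw [h2]; exact j'.2
      rw [Equiv.swap_apply_of_ne_of_ne h1 h2, extPref_high h _ m hm, extPref_high h _ m hm]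
end Ext


namespace Ext
variable {n : ℕ}

def down : Fin n → Fin 4 := fun m => ⟨(m : ℕ) % 4, Nat.mod_lt _ (by norm_num)⟩

lemma down_emb (h : 4 ≤ n) (m : Fin 4) : down (embO h m) = m :=
  Fin.ext (Nat.mod_eq_of_lt m.2)

lemma down_low {m : Fin n} (hm : (m : ℕ) < 4) : down m = ⟨(m : ℕ), hm⟩ :=
  Fin.ext (Nat.mod_eq_of_lt hm)

lemma fosd_sum' (h : 4 ≤ n) (Qi : Pref 4) (jn : Fin n) (hj : (jn : ℕ) < 4) (g : Fin n → ℝ) :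
    ∑ m ∈ univ.filter (fun m => extPref h Qi m ≤ extPref h Qi jn), g m
      = ∑ m ∈ univ.filter (fun m : Fin 4 => Qi m ≤ Qi ⟨(jn : ℕ), hj⟩), g (embO h m) :=
  fosd_sum h Qi ⟨(jn : ℕ), hj⟩ g

end Ext

theorem impossibility_extends_to_larger_n (n : ℕ) (hn : 4 < n)
    (h : ∃ φ : Mechanism n, ValidMech φ ∧ UpperInvariant φ ∧ LowerInvariant φ ∧
      OrdEff φ ∧ SymmetricMech φ) :
    ∃ ψ : Mechanism 4, ValidMech ψ ∧ UpperInvariant ψ ∧ LowerInvariant ψ ∧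
      OrdEff ψ ∧ SymmetricMech ψ := by
  obtain ⟨φ, hv, hui, hli, hoe, hsym⟩ := h
  have h4 : 4 ≤ n := le_of_lt hn
  have hdiag : ∀ (Q : Fin 4 → Pref 4) (k : Fin n), ¬(k : ℕ) < 4 →
      φ (Ext.extProfile h4 Q) k k = 1 :=
    fun Q => Ext.key h4 _ _ (hv _) (hoe _) (Ext.ext_htop h4 Q) (Ext.ext_hrank h4 Q)
  have hzrow : ∀ (Q : Fin 4 → Pref 4) (k : Fin n), ¬(k : ℕ) < 4 → ∀ j, j ≠ k →
      φ (Ext.extProfile h4 Q) k j = 0 := by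
    intro Q k hk j hj
    exact Ext.one_of_ne_zero _ (fun j => (hv _).1 k j) ((hv _).2.1 k) k (hdiag Q k hk) hj
  have hzcol : ∀ (Q : Fin 4 → Pref 4) (k : Fin n), ¬(k : ℕ) < 4 → ∀ i, i ≠ k →
      φ (Ext.extProfile h4 Q) i k = 0 := by
    intro Q k hk i hi
    exact Ext.one_of_ne_zero (fun i => φ (Ext.extProfile h4 Q) i k) (fun i => (hv _).1 i k)
      ((hv _).2.2 k) k (hdiag Q k hk) hi
  have hne : ∀ (a : Fin 4) (k : Fin n), ¬(k : ℕ) < 4 → Ext.embO h4 a ≠ k := by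
    intro a k hk h2
    apply hk; rw [← h2]; exact a.2
  refine ⟨fun Q i j => φ (Ext.extProfile h4 Q) (Ext.embO h4 i) (Ext.embO h4 j),
    ?_, ?_, ?_, ?_, ?_⟩
  · -- ValidMech
    intro Q
    refine ⟨fun i j => (hv _).1 _ _, ?_, ?_⟩
    · intro i
      have hsplit := Finset.sum_filter_add_sum_filter_not univ (fun k : Fin n => (k : ℕ) < 4)
        (fun j => φ (Ext.extProfile h4 Q) (Ext.embO h4 i) j)
      have hS0 : ∑ j ∈ univ.filter (fun k : Fin n => ¬(k : ℕ) < 4),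
          φ (Ext.extProfile h4 Q) (Ext.embO h4 i) j = 0 := by
        refine Finset.sum_eq_zero (fun j hj => ?_)
        simp only [mem_filter, mem_univ, true_and] at hj
        exact hzcol Q j hj _ (hne i j hj)
      rw [(hv _).2.1] at hsplit
      have := Ext.sum_emb h4 (fun j => φ (Ext.extProfile h4 Q) (Ext.embO h4 i) j)
      dsimp only
      rw [← this]
      linarith
    · intro j
      have hsplit := Finset.sum_filter_add_sum_filter_not univ (fun k : Fin n => (k : ℕ) < 4)
        (fun i => φ (Ext.extProfile h4 Q) i (Ext.embO h4 j))
      have hS0 : ∑ i ∈ univ.filter (fun k : Fin n => ¬(k : ℕ) < 4),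
          φ (Ext.extProfile h4 Q) i (Ext.embO h4 j) = 0 := by
        refine Finset.sum_eq_zero (fun i hi => ?_)
        simp only [mem_filter, mem_univ, true_and] at hi
        exact hzrow Q i hi _ (hne j i hi)
      rw [(hv _).2.2] at hsplit
      have := Ext.sum_emb h4 (fun i => φ (Ext.extProfile h4 Q) i (Ext.embO h4 j))
      dsimp only
      rw [← this]
      linarith
  · -- UpperInvariant
    intro Q i j j' P' hsw k hk
    show φ (Ext.extProfile h4 (Function.update Q i P')) (Ext.embO h4 i) (Ext.embO h4 k) = _
    rw [Ext.extProfile_update h4 Q i P']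
    refine hui (Ext.extProfile h4 Q) (Ext.embO h4 i) (Ext.embO h4 j) (Ext.embO h4 j')
      (Ext.extPref h4 P') ?_ (Ext.embO h4 k) ?_
    · rw [Ext.extProfile_emb]
      exact Ext.adjswap_lift h4 (Q i) P' j j' hsw
    · rw [Ext.extProfile_emb]
      exact (Ext.emb_lt_iff h4 (Q i) k j).mpr hk
  · -- LowerInvariant
    intro Q i j j' P' hsw k hk
    show φ (Ext.extProfile h4 (Function.update Q i P')) (Ext.embO h4 i) (Ext.embO h4 k) = _
    rw [Ext.extProfile_update h4 Q i P']
    refine hli (Ext.extProfile h4 Q) (Ext.embO h4 i) (Ext.embO h4 j) (Ext.embO h4 j')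
      (Ext.extPref h4 P') ?_ (Ext.embO h4 k) ?_
    · rw [Ext.extProfile_emb]
      exact Ext.adjswap_lift h4 (Q i) P' j j' hsw
    · rw [Ext.extProfile_emb]
      exact (Ext.emb_lt_iff h4 (Q i) j' k).mpr hk
  · -- OrdEff
    intro Q hcon
    obtain ⟨y4, hy4, hdom, i₀, j₀, hst⟩ := hcon
    obtain ⟨hy40, hy4r, hy4c⟩ := hy4
    apply hoe (Ext.extProfile h4 Q)
    set P : Fin n → Pref n := Ext.extProfile h4 Q with hP
    set x : Assignment n := φ P with hx
    set yn : Assignment n := fun i j =>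
      if (i : ℕ) < 4 then (if (j : ℕ) < 4 then y4 (Ext.down i) (Ext.down j) else 0)
      else (if j = i then 1 else 0) with hyn
    have hyn0 : ∀ i j, 0 ≤ yn i j := by
      intro i j
      rw [hyn]; dsimp only
      split_ifs with h1 h2 h3
      · exact hy40 _ _
      · exact le_refl 0
      · norm_num
      · exact le_refl 0
    have hynrow : ∀ i, ∑ j, yn i j = 1 := by
      intro i
      by_cases hi : (i : ℕ) < 4
      · have e1 : ∀ j : Fin n, yn i j = if (j : ℕ) < 4 then y4 (Ext.down i) (Ext.down j) else 0 := by
          intro j; rw [hyn]; dsimp only; rw [if_pos hi]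
        calc ∑ j, yn i j
            = ∑ j ∈ univ.filter (fun j : Fin n => (j : ℕ) < 4), y4 (Ext.down i) (Ext.down j) := by
              rw [Finset.sum_filter]
              exact Finset.sum_congr rfl (fun j _ => e1 j)
          _ = ∑ j : Fin 4, y4 (Ext.down i) (Ext.down (Ext.embO h4 j)) :=
              Ext.sum_emb h4 (fun j => y4 (Ext.down i) (Ext.down j))
          _ = ∑ j : Fin 4, y4 (Ext.down i) j :=
              Finset.sum_congr rfl (fun j _ => by rw [Ext.down_emb h4 j])
          _ = 1 := hy4r _
      · have e1 : ∀ j : Fin n, yn i j = if j = i then 1 else 0 := by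
          intro j; rw [hyn]; dsimp only; rw [if_neg hi]
        calc ∑ j, yn i j = ∑ j, if j = i then (1:ℝ) else 0 :=
              Finset.sum_congr rfl (fun j _ => e1 j)
          _ = 1 := by simp
    have hyncol : ∀ j, ∑ i, yn i j = 1 := by
      intro j
      have hsplit := Finset.sum_filter_add_sum_filter_not univ
        (fun k : Fin n => (k : ℕ) < 4) (fun i => yn i j)
      by_cases hj : (j : ℕ) < 4
      · have e1 : ∑ i ∈ univ.filter (fun k : Fin n => (k : ℕ) < 4), yn i j = 1 := by
          have e0 : ∀ i ∈ univ.filter (fun k : Fin n => (k : ℕ) < 4),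
              yn i j = y4 (Ext.down i) (Ext.down j) := by
            intro i hi
            simp only [mem_filter, mem_univ, true_and] at hi
            rw [hyn]; dsimp only; rw [if_pos hi, if_pos hj]
          rw [Finset.sum_congr rfl e0, Ext.sum_emb h4 (fun i => y4 (Ext.down i) (Ext.down j))]
          calc ∑ i : Fin 4, y4 (Ext.down (Ext.embO h4 i)) (Ext.down j)
              = ∑ i : Fin 4, y4 i (Ext.down j) :=
                Finset.sum_congr rfl (fun i _ => by rw [Ext.down_emb h4 i])
            _ = 1 := hy4c _
        have e2 : ∑ i ∈ univ.filter (fun k : Fin n => ¬(k : ℕ) < 4), yn i j = 0 := by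
          refine Finset.sum_eq_zero (fun i hi => ?_)
          simp only [mem_filter, mem_univ, true_and] at hi
          rw [hyn]; dsimp only; rw [if_neg hi, if_neg]
          intro hji; rw [hji] at hj; exact hi hj
        rw [← hsplit, e1, e2]; ring
      · have e1 : ∑ i ∈ univ.filter (fun k : Fin n => (k : ℕ) < 4), yn i j = 0 := by
          refine Finset.sum_eq_zero (fun i hi => ?_)
          simp only [mem_filter, mem_univ, true_and] at hi
          rw [hyn]; dsimp only; rw [if_pos hi, if_neg hj]
        have e2 : ∑ i ∈ univ.filter (fun k : Fin n => ¬(k : ℕ) < 4), yn i j = 1 := by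
          have e0 : ∀ i ∈ univ.filter (fun k : Fin n => ¬(k : ℕ) < 4),
              yn i j = if j = i then (1:ℝ) else 0 := by
            intro i hi
            simp only [mem_filter, mem_univ, true_and] at hi
            rw [hyn]; dsimp only; rw [if_neg hi]
          rw [Finset.sum_congr rfl e0, Finset.sum_ite_eq, if_pos]
          simp only [mem_filter, mem_univ, true_and]
          exact hj
        rw [← hsplit, e1, e2]; ring
    have hfosd : ∀ i, FOSD (P i) (yn i) (x i) := by
      intro i j
      by_cases hi : (i : ℕ) < 4
      · have hPi : P i = Ext.extPref h4 (Q ⟨(i : ℕ), hi⟩) := Ext.extProfile_low h4 Q i hi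
        by_cases hj : (j : ℕ) < 4
        · rw [hPi, Ext.fosd_sum' h4 _ j hj (x i), Ext.fosd_sum' h4 _ j hj (yn i)]
          have e0 : ∀ m ∈ univ.filter
              (fun m : Fin 4 => Q ⟨(i : ℕ), hi⟩ m ≤ Q ⟨(i : ℕ), hi⟩ ⟨(j : ℕ), hj⟩),
              yn i (Ext.embO h4 m) = y4 ⟨(i : ℕ), hi⟩ m := by
            intro m _
            rw [hyn]; dsimp only
            rw [if_pos hi, if_pos (show ((Ext.embO h4 m : Fin n) : ℕ) < 4 from m.2),
              Ext.down_emb h4 m, Ext.down_low hi]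
          rw [Finset.sum_congr rfl e0]
          exact hdom ⟨(i : ℕ), hi⟩ ⟨(j : ℕ), hj⟩
        · have hle : ∑ m ∈ univ.filter (fun m => P i m ≤ P i j), x i m ≤ 1 := by
            rw [← (hv P).2.1 i]
            exact Finset.sum_le_sum_of_subset_of_nonneg (Finset.subset_univ _)
              (fun m _ _ => (hv P).1 i m)
          have heq : ∑ m ∈ univ.filter (fun m => P i m ≤ P i j), yn i m = 1 := by
            rw [← hynrow i]
            refine Finset.sum_subset (Finset.subset_univ _) (fun m _ hm => ?_)
            simp only [mem_filter, mem_univ, true_and] at hm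
            have hm4 : ¬ (m : ℕ) < 4 := by
              intro hm4
              exact hm (le_of_lt (Ext.ext_hrank h4 Q i m j hi hm4 hj))
            rw [hyn]; dsimp only; rw [if_pos hi, if_neg hm4]
          rw [heq]; exact hle
      · have hle : ∑ m ∈ univ.filter (fun m => P i m ≤ P i j), x i m ≤ 1 := by
          rw [← (hv P).2.1 i]
          exact Finset.sum_le_sum_of_subset_of_nonneg (Finset.subset_univ _)
            (fun m _ _ => (hv P).1 i m)
        have heq : ∑ m ∈ univ.filter (fun m => P i m ≤ P i j), yn i m = 1 := by
          have e1 : ∀ m ∈ univ.filter (fun m => P i m ≤ P i j),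
              yn i m = if m = i then (1:ℝ) else 0 := by
            intro m _
            rw [hyn]; dsimp only; rw [if_neg hi]
          rw [Finset.sum_congr rfl e1, Finset.sum_ite_eq', if_pos]
          simp only [mem_filter, mem_univ, true_and]
          rw [Fin.le_def, Ext.ext_htop h4 Q i hi]
          exact Nat.zero_le _
        rw [heq]; exact hle
    have hstr : ∑ m ∈ univ.filter
          (fun m => P (Ext.embO h4 i₀) m ≤ P (Ext.embO h4 i₀) (Ext.embO h4 j₀)),
        x (Ext.embO h4 i₀) m <
        ∑ m ∈ univ.filter
          (fun m => P (Ext.embO h4 i₀) m ≤ P (Ext.embO h4 i₀) (Ext.embO h4 j₀)),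
        yn (Ext.embO h4 i₀) m := by
      have hPi : P (Ext.embO h4 i₀) = Ext.extPref h4 (Q i₀) := Ext.extProfile_emb h4 Q i₀
      rw [hPi, Ext.fosd_sum h4 _ j₀ (x (Ext.embO h4 i₀)),
        Ext.fosd_sum h4 _ j₀ (yn (Ext.embO h4 i₀))]
      have e0 : ∀ m ∈ univ.filter (fun m : Fin 4 => Q i₀ m ≤ Q i₀ j₀),
          yn (Ext.embO h4 i₀) (Ext.embO h4 m) = y4 i₀ m := by
        intro m _
        rw [hyn]; dsimp only
        rw [if_pos (show ((Ext.embO h4 i₀ : Fin n) : ℕ) < 4 from i₀.2),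
          if_pos (show ((Ext.embO h4 m : Fin n) : ℕ) < 4 from m.2),
          Ext.down_emb h4 i₀, Ext.down_emb h4 m]
      rw [Finset.sum_congr rfl e0]
      exact hst
    exact ⟨yn, ⟨hyn0, hynrow, hyncol⟩, hfosd, Ext.embO h4 i₀, Ext.embO h4 j₀, hstr⟩
  · -- SymmetricMech
    intro Q i i' hQ
    have he : Ext.extProfile h4 Q (Ext.embO h4 i) = Ext.extProfile h4 Q (Ext.embO h4 i') := by
      rw [Ext.extProfile_emb, Ext.extProfile_emb, hQ]
    have h2 := hsym (Ext.extProfile h4 Q) _ _ he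
    funext j
    exact congrFun h2 (Ext.embO h4 j)
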